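/- For any two Borel probability measures μ, ν on a compact subset S of ℝ: J(μ,ν) ≥ 0, J(μ,ν) = J(ν,μ), and J(μ,ν) = 0 if and only if μ = ν. -/

import Mathlib

open MeasureTheory ProbabilityTheory Filter Topology
open scoped ENNReal NNReal Classical

/-- Relative entropy (Kullback–Leibler divergence) `H(υ|μ)`, as an extended real:
`∫ log(dυ/dμ) dυ` if `υ ≪ μ` (and the integral exists), and `+∞` otherwise. -/
noncomputable def relEnt {α : Type*} [MeasurableSpace α] (υ μ : Measure α) : EReal :=
  if υ ≪ μ ∧ Integrable (llr υ μ) υ then ((∫ x, llr υ μ x ∂υ : ℝ) : EReal) else ⊤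

/-- The J-divergence `J(μ,ν) = inf { H(υ|μ) + H(υ|ν) : υ a probability measure }`. -/
noncomputable def Jdiv {α : Type*} [MeasurableSpace α] (μ ν : Measure α) : EReal :=
  ⨅ (υ : Measure α) (_ : IsProbabilityMeasure υ), relEnt υ μ + relEnt υ ν

section Aux

variable {α : Type*} [MeasurableSpace α]

lemma amgm (a b : ℝ≥0∞) (ha : a ≠ ⊤) (hb : b ≠ ⊤) : (a * b) ^ (1/2:ℝ) ≤ (a + b) / 2 := by
  lift a to ℝ≥0 using ha
  lift b to ℝ≥0 using hb
  rw [← ENNReal.coe_mul, ← ENNReal.coe_rpow_of_nonneg _ (by norm_num),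
    ← ENNReal.coe_add, ← ENNReal.coe_two, ← ENNReal.coe_div (by norm_num), ENNReal.coe_le_coe,
    ← NNReal.coe_le_coe]
  push_cast [NNReal.coe_rpow]
  rw [← Real.sqrt_eq_rpow]
  have h : (a:ℝ) * b ≤ (((a:ℝ) + b) / 2) ^ 2 := by nlinarith [a.coe_nonneg, b.coe_nonneg, sq_nonneg ((a:ℝ) - b)]
  calc Real.sqrt ((a:ℝ)*b) ≤ Real.sqrt ((((a:ℝ)+b)/2)^2) := Real.sqrt_le_sqrt h
    _ = ((a:ℝ)+b)/2 := Real.sqrt_sq (by positivity)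

lemma amgm_eq (a b : ℝ≥0∞) (ha : a ≠ ⊤) (hb : b ≠ ⊤) (h : (a * b) ^ (1/2:ℝ) = (a + b) / 2) :
    a = b := by
  lift a to ℝ≥0 using ha
  lift b to ℝ≥0 using hb
  rw [← ENNReal.coe_mul, ← ENNReal.coe_rpow_of_nonneg _ (by norm_num),
    ← ENNReal.coe_add, ← ENNReal.coe_two, ← ENNReal.coe_div (by norm_num), ENNReal.coe_inj] at h
  rw [ENNReal.coe_inj]
  have h' : ((a:ℝ) * b) ^ (1/2:ℝ) = ((a:ℝ) + b) / 2 := by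
    rw [← NNReal.coe_inj] at h; push_cast [NNReal.coe_rpow] at h; exact h
  rw [← Real.sqrt_eq_rpow] at h'
  have h2 : (a:ℝ) * b = (((a:ℝ)+b)/2)^2 := by
    have := congrArg (· ^ 2) h'
    rwa [Real.sq_sqrt (by positivity : (0:ℝ) ≤ (a:ℝ)*b)] at this
  rw [← NNReal.coe_inj]
  nlinarith [sq_nonneg ((a:ℝ) - b)]


noncomputable def BC (μ ν : Measure α) : ℝ≥0∞ :=
  ∫⁻ x, (μ.rnDeriv (μ + ν) x * ν.rnDeriv (μ + ν) x) ^ (1/2:ℝ) ∂(μ + ν)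

section BC
variable (μ ν : Measure α) [IsProbabilityMeasure μ] [IsProbabilityMeasure ν]

lemma rnDeriv_add_self' : μ.rnDeriv (μ + ν) + ν.rnDeriv (μ + ν) =ᵐ[μ + ν] 1 := by
  have h1 := Measure.rnDeriv_add' μ ν (μ + ν)
  have h2 := Measure.rnDeriv_self (μ + ν)
  filter_upwards [h1, h2] with x hx1 hx2
  simp only [Pi.add_apply, Pi.one_apply]
  rw [← Pi.add_apply, ← hx1, hx2]

lemma lint_half : ∫⁻ x, (μ.rnDeriv (μ + ν) x + ν.rnDeriv (μ + ν) x) / 2 ∂(μ + ν) = 1 := by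
  have : ∫⁻ x, (μ.rnDeriv (μ + ν) x + ν.rnDeriv (μ + ν) x) / 2 ∂(μ + ν)
      = ∫⁻ _, (1:ℝ≥0∞) / 2 ∂(μ + ν) := by
    refine lintegral_congr_ae ?_
    filter_upwards [rnDeriv_add_self' μ ν] with x hx
    rw [← Pi.add_apply, hx]; rfl
  rw [this, lintegral_const]
  simp only [Measure.add_apply, measure_univ, one_add_one_eq_two, one_div]
  rw [ENNReal.inv_mul_cancel] <;> norm_num

lemma BC_le_one : BC μ ν ≤ 1 := by
  rw [BC, ← lint_half μ ν]
  refine lintegral_mono_ae ?_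
  filter_upwards [Measure.rnDeriv_ne_top μ (μ + ν), Measure.rnDeriv_ne_top ν (μ + ν)] with x h1 h2
  exact amgm _ _ h1 h2

lemma eq_of_BC_eq_one (h : BC μ ν = 1) : μ = ν := by
  set lam := μ + ν with hlam
  set p := μ.rnDeriv lam with hp
  set q := ν.rnDeriv lam with hq
  have hle : ∀ᵐ x ∂lam, (p x * q x) ^ (1/2:ℝ) ≤ (p x + q x) / 2 := by
    filter_upwards [Measure.rnDeriv_ne_top μ lam, Measure.rnDeriv_ne_top ν lam] with x h1 h2
    exact amgm _ _ h1 h2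
  have hmeas1 : Measurable fun x => (p x * q x) ^ (1/2:ℝ) :=
    ((μ.measurable_rnDeriv lam).mul (ν.measurable_rnDeriv lam)).pow_const _
  have hsub : ∫⁻ x, (p x + q x) / 2 - (p x * q x) ^ (1/2:ℝ) ∂lam = 0 := by
    rw [lintegral_sub hmeas1 (by rw [← BC, h]; exact ENNReal.one_ne_top) hle, lint_half μ ν, ← BC, h,
      tsub_self]
  have hae : ∀ᵐ x ∂lam, (p x + q x) / 2 - (p x * q x) ^ (1/2:ℝ) = 0 := by
    refine (lintegral_eq_zero_iff ?_).mp hsub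
    exact (((μ.measurable_rnDeriv lam).add (ν.measurable_rnDeriv lam)).div_const 2).sub hmeas1
  have hpq : p =ᵐ[lam] q := by
    filter_upwards [hae, hle, Measure.rnDeriv_ne_top μ lam, Measure.rnDeriv_ne_top ν lam]
      with x h0 h1 h2 h3
    exact amgm_eq _ _ h2 h3 (le_antisymm h1 (tsub_eq_zero_iff_le.mp h0))
  have hμ : μ ≪ lam := Measure.absolutelyContinuous_of_le (Measure.le_add_right le_rfl)
  have hν : ν ≪ lam := Measure.absolutelyContinuous_of_le (Measure.le_add_left le_rfl)
  rw [← Measure.withDensity_rnDeriv_eq μ lam hμ, ← Measure.withDensity_rnDeriv_eq ν lam hν]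
  exact withDensity_congr_ae hpq
end BC


lemma keyIneq (μ ν υ : Measure α)
    [IsProbabilityMeasure μ] [IsProbabilityMeasure ν] [IsProbabilityMeasure υ]
    (hμ : υ ≪ μ) (hν : υ ≪ ν) (h1 : Integrable (llr υ μ) υ) (h2 : Integrable (llr υ ν) υ) :
    Real.exp (-((∫ x, llr υ μ x ∂υ) + (∫ x, llr υ ν x ∂υ)) / 2) ≤ (BC μ ν).toReal := by
  set lam := μ + ν with hlam
  have hμl : μ ≪ lam := Measure.absolutelyContinuous_of_le (Measure.le_add_right le_rfl)
  have hνl : ν ≪ lam := Measure.absolutelyContinuous_of_le (Measure.le_add_left le_rfl)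
  have hυl : υ ≪ lam := hμ.trans hμl
  set p := μ.rnDeriv lam with hp
  set q := ν.rnDeriv lam with hq
  set u := υ.rnDeriv lam with hu
  set g : α → ℝ≥0∞ := fun x => (p x * q x) ^ (1/2:ℝ) * (u x)⁻¹ with hg
  have hg_meas : Measurable g :=
    (((μ.measurable_rnDeriv lam).mul (ν.measurable_rnDeriv lam)).pow_const _).mul
      (υ.measurable_rnDeriv lam).inv
  -- the a.e. pointwise identity
  have h_ae : (fun x => Real.exp (-(llr υ μ x + llr υ ν x) / 2)) =ᵐ[υ] fun x => (g x).toReal := by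
    have a1 : υ.rnDeriv μ * p =ᵐ[υ] u := hυl.ae_le (Measure.rnDeriv_mul_rnDeriv hμ)
    have a2 : υ.rnDeriv ν * q =ᵐ[υ] u := hυl.ae_le (Measure.rnDeriv_mul_rnDeriv hν)
    have hu_pos : ∀ᵐ x ∂υ, 0 < u x := Measure.rnDeriv_pos hυl
    have hu_fin : ∀ᵐ x ∂υ, u x ≠ ∞ := hυl.ae_le (Measure.rnDeriv_ne_top υ lam)
    have hvμ_pos : ∀ᵐ x ∂υ, 0 < υ.rnDeriv μ x := Measure.rnDeriv_pos hμ
    have hvμ_fin : ∀ᵐ x ∂υ, υ.rnDeriv μ x ≠ ∞ := hμ.ae_le (Measure.rnDeriv_ne_top υ μ)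
    have hvν_pos : ∀ᵐ x ∂υ, 0 < υ.rnDeriv ν x := Measure.rnDeriv_pos hν
    have hvν_fin : ∀ᵐ x ∂υ, υ.rnDeriv ν x ≠ ∞ := hν.ae_le (Measure.rnDeriv_ne_top υ ν)
    have hp_fin : ∀ᵐ x ∂υ, p x ≠ ∞ := hυl.ae_le (Measure.rnDeriv_ne_top μ lam)
    have hq_fin : ∀ᵐ x ∂υ, q x ≠ ∞ := hυl.ae_le (Measure.rnDeriv_ne_top ν lam)
    filter_upwards [a1, a2, hu_pos, hu_fin, hvμ_pos, hvμ_fin, hvν_pos, hvν_fin, hp_fin, hq_fin]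
      with x ha1 ha2 hux hufx hax hafx hbx hbfx hpfx hqfx
    simp only [Pi.mul_apply] at ha1 ha2
    -- real versions
    set A := (υ.rnDeriv μ x).toReal with hA
    set B := (υ.rnDeriv ν x).toReal with hB
    set P := (p x).toReal with hP
    set Q := (q x).toReal with hQ
    set U := (u x).toReal with hU
    have hU_pos : 0 < U := ENNReal.toReal_pos hux.ne' hufx
    have hA_pos : 0 < A := ENNReal.toReal_pos hax.ne' hafx
    have hB_pos : 0 < B := ENNReal.toReal_pos hbx.ne' hbfx
    have hAP : A * P = U := by rw [hA, hP, hU, ← ENNReal.toReal_mul, ha1]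
    have hBQ : B * Q = U := by rw [hB, hQ, hU, ← ENNReal.toReal_mul, ha2]
    have hP_pos : 0 < P := by
      rcases (ENNReal.toReal_pos_iff.mp hU_pos) with ⟨h0, _⟩
      by_contra hc
      push_neg at hc
      have : P = 0 := le_antisymm hc ENNReal.toReal_nonneg
      rw [this, mul_zero] at hAP
      exact hU_pos.ne hAP
    have hQ_pos : 0 < Q := by
      by_contra hc
      push_neg at hc
      have : Q = 0 := le_antisymm hc ENNReal.toReal_nonneg
      rw [this, mul_zero] at hBQ
      exact hU_pos.ne hBQ
    have hllr1 : llr υ μ x = Real.log U - Real.log P := by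
      have hl : Real.log A + Real.log P = Real.log U := by
        rw [← Real.log_mul hA_pos.ne' hP_pos.ne', hAP]
      have he : llr υ μ x = Real.log A := rfl
      rw [he]; linarith
    have hllr2 : llr υ ν x = Real.log U - Real.log Q := by
      have hl : Real.log B + Real.log Q = Real.log U := by
        rw [← Real.log_mul hB_pos.ne' hQ_pos.ne', hBQ]
      have he : llr υ ν x = Real.log B := rfl
      rw [he]; linarith
    have hgx : (g x).toReal = (P * Q) ^ (1/2:ℝ) * U⁻¹ := by
      rw [hg]
      simp only
      rw [ENNReal.toReal_mul, ENNReal.toReal_inv, ← ENNReal.toReal_rpow, ENNReal.toReal_mul]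
    rw [hgx, hllr1, hllr2]
    rw [Real.rpow_def_of_pos (by positivity), Real.log_mul hP_pos.ne' hQ_pos.ne',
      ← Real.exp_log hU_pos, ← Real.exp_neg, ← Real.exp_add]
    congr 1
    rw [Real.log_exp]
    ring
  -- lintegral bound
  have h_lint : ∫⁻ x, g x ∂υ ≤ BC μ ν := by
    rw [← lintegral_rnDeriv_mul hυl hg_meas.aemeasurable]
    refine lintegral_mono fun x => ?_
    calc υ.rnDeriv lam x * g x = (p x * q x) ^ (1/2:ℝ) * (u x * (u x)⁻¹) := by
          rw [hg]; simp only; rw [hu]; ring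
      _ ≤ (p x * q x) ^ (1/2:ℝ) * 1 := mul_le_mul_right (ENNReal.mul_inv_le_one _) _
      _ = (p x * q x) ^ (1/2:ℝ) := mul_one _
  have hBC_ne_top : BC μ ν ≠ ⊤ := ((BC_le_one μ ν).trans_lt ENNReal.one_lt_top).ne
  have h_lint_ne : ∫⁻ x, g x ∂υ ≠ ⊤ := (h_lint.trans_lt hBC_ne_top.lt_top).ne
  have h_int_g : Integrable (fun x => (g x).toReal) υ :=
    integrable_toReal_of_lintegral_ne_top hg_meas.aemeasurable h_lint_ne
  have hf_int : Integrable (fun x => -(llr υ μ x + llr υ ν x) / 2) υ := ((h1.add h2).neg).div_const 2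
  have hexp_int : Integrable (fun x => Real.exp (-(llr υ μ x + llr υ ν x) / 2)) υ :=
    h_int_g.congr h_ae.symm
  have jensen : Real.exp (∫ x, -(llr υ μ x + llr υ ν x) / 2 ∂υ)
      ≤ ∫ x, Real.exp (-(llr υ μ x + llr υ ν x) / 2) ∂υ :=
    convexOn_exp.map_integral_le Real.continuous_exp.continuousOn isClosed_univ
      (Filter.Eventually.of_forall fun x => Set.mem_univ _) hf_int hexp_int
  have hIf : ∫ x, -(llr υ μ x + llr υ ν x) / 2 ∂υ
      = -((∫ x, llr υ μ x ∂υ) + (∫ x, llr υ ν x ∂υ)) / 2 := by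
    rw [integral_div, integral_neg, integral_add h1 h2]
  have hIexp : ∫ x, Real.exp (-(llr υ μ x + llr υ ν x) / 2) ∂υ ≤ (BC μ ν).toReal := by
    rw [integral_congr_ae h_ae, integral_toReal hg_meas.aemeasurable (ae_lt_top hg_meas h_lint_ne)]
    exact ENNReal.toReal_mono hBC_ne_top h_lint
  rw [← hIf]
  exact jensen.trans hIexp


end Aux

section Glue

variable {α : Type*} [MeasurableSpace α]

lemma relEnt_eq_top (υ μ : Measure α) (h : ¬(υ ≪ μ ∧ Integrable (llr υ μ) υ)) :
    relEnt υ μ = ⊤ := if_neg h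

lemma relEnt_eq_coe (υ μ : Measure α) (h : υ ≪ μ ∧ Integrable (llr υ μ) υ) :
    relEnt υ μ = ((∫ x, llr υ μ x ∂υ : ℝ) : EReal) := if_pos h

lemma relEnt_ne_bot (υ μ : Measure α) : relEnt υ μ ≠ ⊥ := by
  rw [relEnt]
  split_ifs
  · exact EReal.coe_ne_bot _
  · simp

lemma relEnt_self (μ : Measure α) [IsProbabilityMeasure μ] : relEnt μ μ = 0 := by
  have hll : llr μ μ =ᵐ[μ] 0 := by
    filter_upwards [Measure.rnDeriv_self μ] with x hx
    simp [llr_def, hx]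
  have hint : Integrable (llr μ μ) μ := (integrable_zero _ _ _).congr hll.symm
  rw [relEnt, if_pos ⟨Measure.AbsolutelyContinuous.rfl, hint⟩, integral_congr_ae hll]
  simp

variable (μ ν : Measure α) [IsProbabilityMeasure μ] [IsProbabilityMeasure ν]

lemma le_Jdiv : ((-2 * Real.log (BC μ ν).toReal : ℝ) : EReal) ≤ Jdiv μ ν := by
  rw [Jdiv]
  refine le_iInf fun υ => le_iInf fun hυ => ?_
  by_cases hc2 : υ ≪ ν ∧ Integrable (llr υ ν) υ
  · by_cases hc1 : υ ≪ μ ∧ Integrable (llr υ μ) υ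
    · rw [relEnt_eq_coe υ μ hc1, relEnt_eq_coe υ ν hc2, ← EReal.coe_add, EReal.coe_le_coe_iff]
      have key := keyIneq μ ν υ hc1.1 hc2.1 hc1.2 hc2.2
      have hpos : 0 < (BC μ ν).toReal := lt_of_lt_of_le (Real.exp_pos _) key
      rw [← Real.le_log_iff_exp_le hpos] at key
      linarith
    · rw [relEnt_eq_top υ μ hc1, EReal.top_add_of_ne_bot (relEnt_ne_bot υ ν)]
      exact le_top
  · rw [relEnt_eq_top υ ν hc2, EReal.add_top_of_ne_bot (relEnt_ne_bot υ μ)]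
    exact le_top

lemma Jdiv_nonneg : 0 ≤ Jdiv μ ν := by
  refine le_trans ?_ (le_Jdiv μ ν)
  have h1 : (BC μ ν).toReal ≤ 1 := by
    have := ENNReal.toReal_mono ENNReal.one_ne_top (BC_le_one μ ν)
    simpa using this
  have h2 : Real.log (BC μ ν).toReal ≤ 0 := Real.log_nonpos ENNReal.toReal_nonneg h1
  have : (0:ℝ) ≤ -2 * Real.log (BC μ ν).toReal := by linarith
  exact_mod_cast EReal.coe_le_coe_iff.mpr this

lemma Jdiv_self : Jdiv μ μ = 0 := by
  refine le_antisymm ?_ (Jdiv_nonneg μ μ)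
  have hle : Jdiv μ μ ≤ relEnt μ μ + relEnt μ μ :=
    iInf_le_of_le μ (iInf_le _ ‹IsProbabilityMeasure μ›)
  rw [relEnt_self μ] at hle
  simpa using hle

lemma eq_of_Jdiv_eq_zero (h : Jdiv μ ν = 0) : μ = ν := by
  by_contra hne
  have hlt : Jdiv μ ν < ⊤ := by
    rw [h]
    exact lt_of_le_of_ne le_top (by simp)
  rw [Jdiv, iInf_lt_iff] at hlt
  obtain ⟨υ, hlt⟩ := hlt
  rw [iInf_lt_iff] at hlt
  obtain ⟨hυ, hlt⟩ := hlt
  have hc1 : υ ≪ μ ∧ Integrable (llr υ μ) υ := by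
    by_contra hc
    rw [relEnt_eq_top υ μ hc, EReal.top_add_of_ne_bot (relEnt_ne_bot υ ν)] at hlt
    exact absurd hlt (lt_irrefl ⊤)
  have hc2 : υ ≪ ν ∧ Integrable (llr υ ν) υ := by
    by_contra hc
    rw [relEnt_eq_top υ ν hc, EReal.add_top_of_ne_bot (relEnt_ne_bot υ μ)] at hlt
    exact absurd hlt (lt_irrefl ⊤)
  have key := keyIneq μ ν υ hc1.1 hc2.1 hc1.2 hc2.2
  have hpos : 0 < (BC μ ν).toReal := lt_of_lt_of_le (Real.exp_pos _) key
  have hBC_ne_one : BC μ ν ≠ 1 := fun h1 => hne (eq_of_BC_eq_one μ ν h1)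
  have hBC_lt_one : BC μ ν < 1 := lt_of_le_of_ne (BC_le_one μ ν) hBC_ne_one
  have hlt1 : (BC μ ν).toReal < 1 := by
    have := (ENNReal.toReal_lt_toReal (ne_top_of_lt hBC_lt_one) ENNReal.one_ne_top).mpr hBC_lt_one
    simpa using this
  have hlog : Real.log (BC μ ν).toReal < 0 := Real.log_neg hpos hlt1
  have hc : (0:ℝ) < -2 * Real.log (BC μ ν).toReal := by linarith
  have := le_Jdiv μ ν
  rw [h] at this
  have h0 : -2 * Real.log (BC μ ν).toReal ≤ (0:ℝ) := by exact_mod_cast this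
  linarith

end Glue

/-- For any two Borel probability measures μ, ν on a compact S ⊆ ℝ:
`J(μ,ν) ≥ 0`, `J(μ,ν) = J(ν,μ)`, and `J(μ,ν) = 0 ↔ μ = ν`. -/
theorem stmt_7 (S : Set ℝ) (hS : IsCompact S) (μ ν : Measure S)
    [IsProbabilityMeasure μ] [IsProbabilityMeasure ν] :
    0 ≤ Jdiv μ ν ∧ Jdiv μ ν = Jdiv ν μ ∧ (Jdiv μ ν = 0 ↔ μ = ν) := by
  refine ⟨Jdiv_nonneg μ ν, ?_, fun h => eq_of_Jdiv_eq_zero μ ν h, fun h => by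
    rw [h]; exact Jdiv_self ν⟩
  rw [Jdiv, Jdiv]
  exact iInf_congr fun υ => iInf_congr fun _ => add_comm _ _
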